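/- Let M₀ = {0} ∪ ℚ_{≥1} and N₀ = ⟨1/p : p prime⟩, both additive submonoids of ℚ_{≥0}. Then the Puiseux monoid M = M₀ + N₀ has 𝒜(M) = {1/p : p prime} and is not atomic; in particular, 5/4 ∈ M is a nonzero element that is not a sum of atoms of M. -/

import Mathlib

/-- An atom of the additive submonoid `M`: a nonzero element of `M` that is not the
sum of two nonzero elements of `M`. -/
def IsAtomOf {α : Type*} [AddCommMonoid α] (M : AddSubmonoid α) (a : α) : Prop :=
  a ∈ M ∧ a ≠ 0 ∧ ∀ b ∈ M, ∀ c ∈ M, b + c = a → b = 0 ∨ c = 0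

/-- The length set of `q` in `M`: the set of all `ℓ` such that `q` is a sum of `ℓ`
atoms of `M` (counted with multiplicity). -/
def LengthSet {α : Type*} [AddCommMonoid α] (M : AddSubmonoid α) (q : α) : Set ℕ :=
  {ℓ | ∃ s : Multiset α, Multiset.card s = ℓ ∧ (∀ a ∈ s, IsAtomOf M a) ∧ s.sum = q}

/-- The additive submonoid `M` satisfies the ACCP: every ascending chain of principal
ideals `f n + M ⊆ f (n+1) + M` stabilizes. -/
def AddACCP {α : Type*} [AddCommMonoid α] (M : AddSubmonoid α) : Prop :=
  ∀ f : ℕ → α, (∀ n, f n ∈ M) → (∀ n, ∃ c ∈ M, f n = f (n + 1) + c) →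
    ∃ N, ∀ n ≥ N, ∃ c ∈ M, f n = f N + c

/-- The Puiseux monoid generated by the reciprocals of the elements of `P`. -/
def MP (P : Set ℕ) : AddSubmonoid ℚ :=
  AddSubmonoid.closure {q : ℚ | ∃ p ∈ P, q = 1 / (p : ℚ)}

section Aux

/-- Sum of a multiset of nonnegative rationals is nonnegative. -/
lemma aux_multiset_sum_nonneg (s : Multiset ℚ) (h : ∀ a ∈ s, 0 ≤ a) : 0 ≤ s.sum := by
  induction s using Multiset.induction with
  | empty => simp
  | cons x t ih =>
    simp only [Multiset.sum_cons]
    have hx := h x (Multiset.mem_cons_self x t)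
    have ht := ih (fun a ha => h a (Multiset.mem_cons_of_mem ha))
    linarith

lemma aux_multiset_sum_pos (s : Multiset ℚ) (h : ∀ a ∈ s, 0 < a) (hne : s ≠ 0) :
    0 < s.sum := by
  obtain ⟨x, hx⟩ := Multiset.exists_mem_of_ne_zero hne
  obtain ⟨t, rfl⟩ := Multiset.exists_cons_of_mem hx
  simp only [Multiset.sum_cons]
  have hx' := h x (Multiset.mem_cons_self x t)
  have ht := aux_multiset_sum_nonneg t (fun a ha => le_of_lt (h a (Multiset.mem_cons_of_mem ha)))
  linarith

/-- A multiset of reciprocals of primes different from `p` sums to `A/D` with `p ∤ D`. -/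
lemma aux_rest_repr (p : ℕ) (hp : p.Prime) :
    ∀ s : Multiset ℚ, (∀ a ∈ s, ∃ q : ℕ, q.Prime ∧ q ≠ p ∧ a = 1 / (q : ℚ)) →
    ∃ A D : ℕ, 0 < D ∧ ¬ p ∣ D ∧ s.sum = (A : ℚ) / D := by
  intro s
  induction s using Multiset.induction with
  | empty =>
    intro _
    exact ⟨0, 1, one_pos, by simpa using hp.one_lt.ne', by simp⟩
  | cons x t ih =>
    intro h
    obtain ⟨A, D, hD, hpD, hsum⟩ := ih (fun a ha => h a (Multiset.mem_cons_of_mem ha))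
    obtain ⟨q, hq, hqp, rfl⟩ := h _ (Multiset.mem_cons_self x t)
    refine ⟨A * q + D, D * q, Nat.mul_pos hD hq.pos, ?_, ?_⟩
    · intro hdvd
      rcases (Nat.Prime.dvd_mul hp).1 hdvd with h1 | h1
      · exact hpD h1
      · exact hqp ((Nat.prime_dvd_prime_iff_eq hp hq).1 h1).symm
    · have hq0 : (q : ℚ) ≠ 0 := Nat.cast_ne_zero.2 hq.pos.ne'
      have hD0 : (D : ℚ) ≠ 0 := Nat.cast_ne_zero.2 hD.ne'
      rw [Multiset.sum_cons, hsum]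
      push_cast
      field_simp
      ring

/-- Key representation: a multiset of prime reciprocals sums to `k/p + A/D` with `p ∤ D`. -/
lemma aux_sum_repr (p : ℕ) (hp : p.Prime) (s : Multiset ℚ)
    (hs : ∀ a ∈ s, ∃ q : ℕ, q.Prime ∧ a = 1 / (q : ℚ)) :
    ∃ k A D : ℕ, 0 < D ∧ ¬ p ∣ D ∧ s.sum = (k : ℚ) / p + (A : ℚ) / D ∧
      (A = 0 → s = Multiset.replicate k (1 / (p : ℚ))) := by
  classical
  set k := s.count (1 / (p : ℚ)) with hk
  have hsplit : s.filter (fun a => a = 1 / (p : ℚ)) + s.filter (fun a => ¬ a = 1 / (p : ℚ)) = s :=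
    Multiset.filter_add_not _ s
  set t := s.filter (fun a => ¬ a = 1 / (p : ℚ)) with ht
  have hrep : s.filter (fun a => a = 1 / (p : ℚ)) = Multiset.replicate k (1 / (p : ℚ)) :=
    Multiset.filter_eq' s _
  have htmem : ∀ a ∈ t, ∃ q : ℕ, q.Prime ∧ q ≠ p ∧ a = 1 / (q : ℚ) := by
    intro a ha
    rw [ht, Multiset.mem_filter] at ha
    obtain ⟨q, hq, rfl⟩ := hs a ha.1
    refine ⟨q, hq, ?_, rfl⟩
    intro hqp
    exact ha.2 (by rw [hqp])
  obtain ⟨A, D, hD, hpD, hsum⟩ := aux_rest_repr p hp t htmem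
  refine ⟨k, A, D, hD, hpD, ?_, ?_⟩
  · rw [← hsplit, Multiset.sum_add, hrep, Multiset.sum_replicate, hsum]
    ring_nf
  · intro hA
    have ht0 : t = 0 := by
      by_contra hne
      have hpos : 0 < t.sum := by
        refine aux_multiset_sum_pos t ?_ hne
        intro a ha
        obtain ⟨q, hq, _, rfl⟩ := htmem a ha
        have : (0:ℚ) < q := by exact_mod_cast hq.pos
        exact one_div_pos.2 this
      rw [hsum, hA] at hpos
      simp at hpos
    rw [← hsplit, hrep, ht0, add_zero]

/-- If a multiset of prime reciprocals sums to `1/p`, it equals `{1/p}`. -/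
lemma aux_sum_eq_one_div (p : ℕ) (hp : p.Prime) (s : Multiset ℚ)
    (hs : ∀ a ∈ s, ∃ q : ℕ, q.Prime ∧ a = 1 / (q : ℚ)) (hsum : s.sum = 1 / (p : ℚ)) :
    s = {(1 / (p : ℚ))} := by
  obtain ⟨k, A, D, hD, hpD, hrep, hA0⟩ := aux_sum_repr p hp s hs
  have hp0 : ((p : ℚ)) ≠ 0 := Nat.cast_ne_zero.2 hp.pos.ne'
  have hD0 : ((D : ℚ)) ≠ 0 := Nat.cast_ne_zero.2 hD.ne'
  rw [hsum] at hrep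
  have key : (D : ℚ) = k * D + p * A := by
    field_simp at hrep
    linarith
  have keyN : D = k * D + p * A := by exact_mod_cast key
  have hk1 : k = 1 ∧ A = 0 := by
    rcases Nat.lt_or_ge k 1 with h | h
    · interval_cases k
      · simp at keyN
        exact absurd (keyN ▸ Dvd.intro A rfl) hpD
    · rcases Nat.lt_or_ge k 2 with h2 | h2
      · interval_cases k
        refine ⟨rfl, ?_⟩
        have hpa : p * A = 0 := by omega
        exact (Nat.mul_eq_zero.1 hpa).resolve_left hp.pos.ne'
      · exfalso
        have : 2 * D ≤ k * D := Nat.mul_le_mul_right D h2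
        omega
  obtain ⟨hk, hA⟩ := hk1
  rw [hA0 hA, hk]
  rfl

/-- No multiset of prime reciprocals sums to `5/4`. -/
lemma aux_no_sum_five_quarters (s : Multiset ℚ)
    (hs : ∀ a ∈ s, ∃ q : ℕ, q.Prime ∧ a = 1 / (q : ℚ)) : s.sum ≠ 5 / 4 := by
  intro hsum
  obtain ⟨k, A, D, hD, hpD, hrep, -⟩ := aux_sum_repr 2 Nat.prime_two s hs
  have hD0 : ((D : ℚ)) ≠ 0 := Nat.cast_ne_zero.2 hD.ne'
  rw [hsum] at hrep
  have key : (5 : ℚ) * D = 2 * (k * D) + 4 * A := by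
    field_simp at hrep
    push_cast at hrep
    linarith
  have keyN : 5 * D = 2 * (k * D) + 4 * A := by exact_mod_cast key
  omega

end Aux

theorem stmt12 (M0 N0 M : AddSubmonoid ℚ)
    (hM0 : (M0 : Set ℚ) = {0} ∪ Set.Ici 1)
    (hN0 : N0 = AddSubmonoid.closure {q : ℚ | ∃ p : ℕ, p.Prime ∧ q = 1 / (p : ℚ)})
    (hM : (M : Set ℚ) = {x | ∃ a ∈ M0, ∃ b ∈ N0, x = a + b}) :
    (∀ a : ℚ, IsAtomOf M a ↔ ∃ p : ℕ, p.Prime ∧ a = 1 / (p : ℚ)) ∧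
    (5 / 4 : ℚ) ∈ M ∧ (5 / 4 : ℚ) ≠ 0 ∧
    ¬ ∃ s : Multiset ℚ, (∀ a ∈ s, IsAtomOf M a) ∧ s.sum = 5 / 4 := by
  -- membership characterizations
  have hM0mem : ∀ x : ℚ, x ∈ M0 ↔ x = 0 ∨ 1 ≤ x := by
    intro x
    rw [← SetLike.mem_coe, hM0]
    simp [Set.mem_Ici]
  have hMmem : ∀ x : ℚ, x ∈ M ↔ ∃ a ∈ M0, ∃ b ∈ N0, x = a + b := by
    intro x
    rw [← SetLike.mem_coe, hM]
    rfl
  have hN0rep : ∀ x ∈ N0, ∃ s : Multiset ℚ,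
      (∀ a ∈ s, ∃ q : ℕ, q.Prime ∧ a = 1 / (q : ℚ)) ∧ s.sum = x := by
    intro x hx
    rw [hN0] at hx
    obtain ⟨l, hl, hsum⟩ := AddSubmonoid.exists_multiset_of_mem_closure hx
    exact ⟨l, fun a ha => hl a ha, hsum⟩
  have hgen : ∀ q : ℕ, q.Prime → (1 / (q : ℚ)) ∈ N0 := by
    intro q hq
    rw [hN0]
    exact AddSubmonoid.subset_closure ⟨q, hq, rfl⟩
  have hN0nonneg : ∀ x ∈ N0, (0:ℚ) ≤ x := by
    intro x hx
    obtain ⟨s, hs, rfl⟩ := hN0rep x hx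
    refine aux_multiset_sum_nonneg s ?_
    intro a ha
    obtain ⟨q, hq, rfl⟩ := hs a ha
    positivity
  have hM0sub : ∀ x ∈ M0, x ∈ M := by
    intro x hx
    exact (hMmem x).2 ⟨x, hx, 0, zero_mem N0, (add_zero x).symm⟩
  have hN0sub : ∀ x ∈ N0, x ∈ M := by
    intro x hx
    exact (hMmem x).2 ⟨0, (hM0mem 0).2 (Or.inl rfl), x, hx, (zero_add x).symm⟩
  have hMnonneg : ∀ x ∈ M, (0:ℚ) ≤ x := by
    intro x hx
    obtain ⟨a, ha, b, hb, rfl⟩ := (hMmem x).1 hx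
    have ha' : (0:ℚ) ≤ a := by
      rcases (hM0mem a).1 ha with h | h
      · simp [h]
      · linarith
    have hb' := hN0nonneg b hb
    linarith
  -- the atom characterization
  have hatom : ∀ a : ℚ, IsAtomOf M a ↔ ∃ p : ℕ, p.Prime ∧ a = 1 / (p : ℚ) := by
    intro a
    constructor
    · rintro ⟨haM, ha0, hdec⟩
      obtain ⟨m, hm, n, hn, rfl⟩ := (hMmem _).1 haM
      by_cases hn0 : n = 0
      · subst hn0
        rw [add_zero] at *
        -- m ∈ M0, m ≠ 0, so m ≥ 1; derive a contradiction
        exfalso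
        have hm1 : 1 ≤ m := ((hM0mem m).1 hm).resolve_left ha0
        rcases eq_or_lt_of_le hm1 with heq | hlt
        · -- m = 1 = 1/2 + 1/2
          have h2 : (1/2 : ℚ) ∈ M := hN0sub _ (by simpa using hgen 2 Nat.prime_two)
          have := hdec (1/2) h2 (1/2) h2 (by rw [← heq]; norm_num)
          norm_num at this
        · -- m > 1 : pick a large prime
          obtain ⟨p, hple, hp⟩ := Nat.exists_infinite_primes ⌈(m-1)⁻¹⌉₊
          have hm1pos : (0:ℚ) < m - 1 := by linarith
          have hppos : (0:ℚ) < p := by exact_mod_cast hp.pos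
          have hcp : (m-1)⁻¹ ≤ (p:ℚ) := le_trans (Nat.le_ceil _) (by exact_mod_cast hple)
          have hkey : 1 / (p:ℚ) ≤ m - 1 := by
            rw [div_le_iff₀ hppos]
            have := mul_le_mul_of_nonneg_left hcp (le_of_lt hm1pos)
            rw [mul_inv_cancel₀ hm1pos.ne'] at this
            linarith
          have hb : m - 1/(p:ℚ) ∈ M := by
            apply hM0sub
            exact (hM0mem _).2 (Or.inr (by linarith))
          have hc : (1/(p:ℚ)) ∈ M := hN0sub _ (hgen p hp)
          have := hdec _ hb _ hc (by ring)
          rcases this with h | h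
          · have : (1:ℚ) ≤ m - 1/(p:ℚ) := by linarith
            rw [h] at this; norm_num at this
          · have hpos : (0:ℚ) < 1/(p:ℚ) := by positivity
            rw [h] at hpos; norm_num at hpos
      · by_cases hm0 : m = 0
        · subst hm0
          rw [zero_add] at *
          obtain ⟨s, hs, hsum⟩ := hN0rep n hn
          rcases s with ⟨l⟩
          induction l with
          | nil => exact absurd hsum.symm (by simpa using ha0)
          | cons x t _ =>
            rcases t with _ | ⟨y, t'⟩
            · -- single element
              obtain ⟨q, hq, hxq⟩ := hs x (by simp)
              exact ⟨q, hq, by simpa [hxq] using hsum.symm⟩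
            · -- at least two elements: contradiction with atomicity
              exfalso
              have hx : x ∈ {q : ℚ | ∃ p : ℕ, p.Prime ∧ q = 1 / (p : ℚ)} := by
                obtain ⟨q, hq, hxq⟩ := hs x (by simp)
                exact ⟨q, hq, hxq⟩
              obtain ⟨q, hq, hxq⟩ := hx
              have hxN : x ∈ N0 := by rw [hxq]; exact hgen q hq
              have htsum : (y ::ₘ (t' : Multiset ℚ)).sum ∈ N0 := by
                rw [hN0]
                refine AddSubmonoid.multiset_sum_mem _ _ ?_
                intro a ha
                have : a ∈ (x ::ₘ y ::ₘ (t' : Multiset ℚ)) := Multiset.mem_cons_of_mem ha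
                obtain ⟨r, hr, har⟩ := hs a this
                exact AddSubmonoid.subset_closure ⟨r, hr, har⟩
              have hsplit : x + (y ::ₘ (t' : Multiset ℚ)).sum = n := by
                rw [← hsum]; simp [Multiset.sum_cons]
              have := hdec x (hN0sub x hxN) _ (hN0sub _ htsum) hsplit
              rcases this with h | h
              · rw [hxq] at h
                have : (0:ℚ) < q := by exact_mod_cast hq.pos
                rw [div_eq_zero_iff] at h
                rcases h with h | h
                · norm_num at h
                · rw [h] at this; norm_num at this
              · have hpos : 0 < (y ::ₘ (t' : Multiset ℚ)).sum := by
                  refine aux_multiset_sum_pos _ ?_ (by simp)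
                  intro a ha
                  have : a ∈ (x ::ₘ y ::ₘ (t' : Multiset ℚ)) := Multiset.mem_cons_of_mem ha
                  obtain ⟨r, hr, rfl⟩ := hs a this
                  have : (0:ℚ) < r := by exact_mod_cast hr.pos
                  exact one_div_pos.2 this
                rw [h] at hpos; norm_num at hpos
        · -- both m and n nonzero: contradiction
          exfalso
          have := hdec m (hM0sub m hm) n (hN0sub n hn) rfl
          tauto
    · rintro ⟨p, hp, rfl⟩
      have hppos : (0:ℚ) < p := by exact_mod_cast hp.pos
      have hp2 : (2:ℚ) ≤ p := by exact_mod_cast hp.two_le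
      refine ⟨hN0sub _ (hgen p hp), by positivity, ?_⟩
      intro b hb c hc hbc
      -- b and c are small, hence lie in N0
      have hbN : b ∈ N0 := by
        obtain ⟨ab, hab, nb, hnb, rfl⟩ := (hMmem b).1 hb
        have hab0 : ab = 0 := by
          rcases (hM0mem ab).1 hab with h | h
          · exact h
          · exfalso
            have h1 : (0:ℚ) ≤ nb := hN0nonneg nb hnb
            have h2 : (0:ℚ) ≤ c := hMnonneg c hc
            have h3 : 1/(p:ℚ) ≤ 1/2 := by
              rw [div_le_div_iff₀ hppos (by norm_num)]; linarith
            linarith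
        rw [hab0, zero_add]; exact hnb
      have hcN : c ∈ N0 := by
        obtain ⟨ac, hac, nc, hnc, rfl⟩ := (hMmem c).1 hc
        have hac0 : ac = 0 := by
          rcases (hM0mem ac).1 hac with h | h
          · exact h
          · exfalso
            have h1 : (0:ℚ) ≤ nc := hN0nonneg nc hnc
            have h2 : (0:ℚ) ≤ b := hMnonneg b hb
            have h3 : 1/(p:ℚ) ≤ 1/2 := by
              rw [div_le_div_iff₀ hppos (by norm_num)]; linarith
            linarith
        rw [hac0, zero_add]; exact hnc
      obtain ⟨sb, hsb, hsbsum⟩ := hN0rep b hbN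
      obtain ⟨sc, hsc, hscsum⟩ := hN0rep c hcN
      have hcomb : (sb + sc).sum = 1/(p:ℚ) := by
        rw [Multiset.sum_add, hsbsum, hscsum, hbc]
      have hmem : ∀ a ∈ sb + sc, ∃ q : ℕ, q.Prime ∧ a = 1 / (q : ℚ) := by
        intro a ha
        rcases Multiset.mem_add.1 ha with h | h
        · exact hsb a h
        · exact hsc a h
      have := aux_sum_eq_one_div p hp _ hmem hcomb
      have hcard : Multiset.card sb + Multiset.card sc = 1 := by
        have := congrArg Multiset.card this
        simpa using this
      rcases Nat.add_eq_one_iff.1 hcard with ⟨h1, _⟩ | ⟨_, h1⟩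
      · left
        rw [← hsbsum, Multiset.card_eq_zero.1 h1, Multiset.sum_zero]
      · right
        rw [← hscsum, Multiset.card_eq_zero.1 h1, Multiset.sum_zero]
  refine ⟨hatom, ?_, by norm_num, ?_⟩
  · exact hM0sub _ ((hM0mem _).2 (Or.inr (by norm_num)))
  · rintro ⟨s, hs, hsum⟩
    refine aux_no_sum_five_quarters s ?_ hsum
    intro a ha
    exact (hatom a).1 (hs a ha)
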